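/- Let μ₁, ..., μ_m be finitely supported probability measures on ℝ that are non-decreasing in convex order and all have mean 1. Then there exists a probability measure μ on ℝᵐ with marginals μ₁, ..., μ_m under which the coordinate process (M₁, ..., M_m) is a martingale, i.e., E^μ[M_{i+1} | M₁,...,M_i] = M_i for all i and E^μ[M₁] = 1. -/

import Mathlib

open MeasureTheory Finset
open scoped ENNReal

section DiracSums

variable {α : Type*} [MeasurableSpace α] [MeasurableSingletonClass α] {β : Type*}

lemma integrable_dirac' (f : α → ℝ) (a : α) : Integrable f (Measure.dirac a) :=
  (integrable_const (f a)).congr (ae_eq_dirac f).symm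

lemma integral_sum_dirac (s : Finset β) (a : β → α) (c : β → ℝ≥0∞) (hc : ∀ y ∈ s, c y ≠ ∞)
    (f : α → ℝ) :
    ∫ x, f x ∂(∑ y ∈ s, c y • Measure.dirac (a y)) = ∑ y ∈ s, (c y).toReal * f (a y) := by
  rw [integral_finset_sum_measure (fun y hy => (integrable_dirac' f (a y)).smul_measure (hc y hy))]
  refine Finset.sum_congr rfl fun y hy => ?_
  rw [integral_smul_measure, integral_dirac, smul_eq_mul]

lemma integrable_sum_dirac (s : Finset β) (a : β → α) (c : β → ℝ≥0∞) (hc : ∀ y ∈ s, c y ≠ ∞)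
    (f : α → ℝ) : Integrable f (∑ y ∈ s, c y • Measure.dirac (a y)) :=
  integrable_finset_sum_measure.2 fun y hy => (integrable_dirac' f (a y)).smul_measure (hc y hy)

lemma restrict_finset_sum (s : Finset β) (μ : β → Measure α) (A : Set α) :
    (∑ y ∈ s, μ y).restrict A = ∑ y ∈ s, (μ y).restrict A := by
  ext u hu
  rw [Measure.restrict_apply hu, Measure.finset_sum_apply, Measure.finset_sum_apply]
  exact Finset.sum_congr rfl fun y _ => (Measure.restrict_apply hu).symm

lemma setIntegral_sum_dirac [∀ (x : α) (A : Set α), Decidable (x ∈ A)] (s : Finset β) (a : β → α) (c : β → ℝ≥0∞) (hc : ∀ y ∈ s, c y ≠ ∞)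
    (f : α → ℝ) (A : Set α) :
    ∫ x in A, f x ∂(∑ y ∈ s, c y • Measure.dirac (a y))
      = ∑ y ∈ s, (c y).toReal * (if a y ∈ A then f (a y) else 0) := by
  classical
  rw [restrict_finset_sum]
  have : ∀ y ∈ s, ((c y • Measure.dirac (a y)).restrict A) = c y • ((Measure.dirac (a y)).restrict A) := by
    intro y _; rw [Measure.restrict_smul]
  rw [Finset.sum_congr rfl this]
  rw [integral_finset_sum_measure (fun y hy => ((integrable_dirac' f (a y)).restrict).smul_measure (hc y hy))]
  refine Finset.sum_congr rfl fun y hy => ?_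
  rw [integral_smul_measure, restrict_dirac, smul_eq_mul]
  split_ifs with h
  · rw [integral_dirac]
  · simp

/-- A finite measure vanishing outside a finite set is a sum of weighted Dirac measures. -/
lemma measure_eq_sum_dirac (ρ : Measure ℝ) (s : Finset ℝ) (h : ρ (↑s : Set ℝ)ᶜ = 0) :
    ρ = ∑ y ∈ s, ρ {y} • Measure.dirac y := by
  classical
  ext A hA
  rw [Measure.finset_sum_apply]
  have h1 : ρ A = ρ (A ∩ ↑s) := by
    refine le_antisymm ?_ (measure_mono Set.inter_subset_left)
    calc ρ A ≤ ρ ((A ∩ ↑s) ∪ (↑s : Set ℝ)ᶜ) := measure_mono (fun x hx => by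
          by_cases hxs : x ∈ (↑s : Set ℝ)
          · exact Or.inl ⟨hx, hxs⟩
          · exact Or.inr hxs)
      _ ≤ ρ (A ∩ ↑s) + ρ (↑s : Set ℝ)ᶜ := measure_union_le _ _
      _ = ρ (A ∩ ↑s) := by rw [h, add_zero]
  have h2 : A ∩ ↑s = ⋃ y ∈ s.filter (· ∈ A), ({y} : Set ℝ) := by
    ext x
    simp only [Set.mem_inter_iff, Set.mem_iUnion, Finset.mem_filter, Set.mem_singleton_iff]
    constructor
    · rintro ⟨hxA, hxs⟩; exact ⟨x, ⟨hxs, hxA⟩, rfl⟩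
    · rintro ⟨y, ⟨hys, hyA⟩, rfl⟩; exact ⟨hyA, hys⟩
  have h3 : ρ (A ∩ ↑s) = ∑ y ∈ s.filter (· ∈ A), ρ {y} := by
    rw [h2, measure_biUnion_finset]
    · intro x hx y hy hxy
      simp only [Function.onFun, Set.disjoint_singleton] at *
      exact hxy
    · exact fun y _ => measurableSet_singleton y
  rw [h1, h3]
  rw [Finset.sum_filter]
  refine Finset.sum_congr rfl fun y _ => ?_
  rw [Measure.smul_apply, Measure.dirac_apply, smul_eq_mul]
  by_cases hy : y ∈ A
  · simp [hy]
  · simp [hy, Set.indicator_of_notMem]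

end DiracSums

lemma exists_martingale_kernel (S T : Finset ℝ) (p q : ℝ → ℝ)
    (hp0 : ∀ x, 0 ≤ p x) (hq0 : ∀ y, 0 ≤ q y)
    (hp1 : ∑ x ∈ S, p x = 1) (hq1 : ∑ y ∈ T, q y = 1)
    (hco : ∀ f : ℝ → ℝ, ConvexOn ℝ Set.univ f → (∃ a b : ℝ, ∀ x, |f x| ≤ a * |x| + b) →
      ∑ x ∈ S, p x * f x ≤ ∑ y ∈ T, q y * f y) :
    ∃ k : ℝ → ℝ → ℝ, (∀ x y, 0 ≤ k x y) ∧ (∀ x ∈ S, ∑ y ∈ T, k x y = 1) ∧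
      (∀ y ∈ T, ∑ x ∈ S, p x * k x y = q y) ∧
      (∀ x ∈ S, p x ≠ 0 → ∑ y ∈ T, k x y * y = x) := by
  classical
  have hS : S.Nonempty := by
    by_contra h
    rw [Finset.not_nonempty_iff_eq_empty] at h
    simp [h] at hp1
  have hT : T.Nonempty := by
    by_contra h
    rw [Finset.not_nonempty_iff_eq_empty] at h
    simp [h] at hq1
  haveI : Nonempty {x // x ∈ S} := ⟨⟨hS.choose, hS.choose_spec⟩⟩
  haveI : Nonempty {y // y ∈ T} := ⟨⟨hT.choose, hT.choose_spec⟩⟩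
  set α := {x // x ∈ S}
  set β := {y // y ∈ T}
  -- the linear map sending a kernel matrix to (second marginal, barycenter profile)
  set L : (α → β → ℝ) →ₗ[ℝ] ((β → ℝ) × (α → ℝ)) :=
    { toFun := fun k => (fun b => ∑ a : α, p a * k a b, fun a => p a * ∑ b : β, k a b * (b : ℝ))
      map_add' := by
        intro k k'
        refine Prod.ext ?_ ?_ <;> funext c <;>
          simp [Finset.sum_add_distrib, mul_add, add_mul]
      map_smul' := by
        intro r k
        refine Prod.ext ?_ ?_ <;> funext c <;>
          simp [Finset.mul_sum, smul_eq_mul] <;> exact Finset.sum_congr rfl fun a _ => by ring }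
      with hL
  set Kset : Set (α → β → ℝ) := {k | (∀ a b, 0 ≤ k a b) ∧ ∀ a, ∑ b : β, k a b = 1} with hKset
  have hKconv : Convex ℝ Kset := by
    rintro k ⟨hk0, hk1⟩ k' ⟨hk'0, hk'1⟩ s t hs ht hst
    constructor
    · intro a b
      have := hk0 a b
      have := hk'0 a b
      simp only [Pi.add_apply, Pi.smul_apply, smul_eq_mul]
      nlinarith
    · intro a
      simp only [Pi.add_apply, Pi.smul_apply, smul_eq_mul]
      rw [Finset.sum_add_distrib, ← Finset.mul_sum, ← Finset.mul_sum, hk1 a, hk'1 a]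
      linarith
  have hKcomp : IsCompact Kset := by
    have hclosed : IsClosed Kset := by
      have hcont : ∀ (a : α) (b : β), Continuous fun k : α → β → ℝ => k a b := fun a b =>
        (continuous_apply b).comp (continuous_apply a)
      have h1 : IsClosed (⋂ (a : α), ⋂ (b : β), {k : α → β → ℝ | 0 ≤ k a b}) :=
        isClosed_iInter fun a => isClosed_iInter fun b =>
          isClosed_le continuous_const (hcont a b)
      have h2 : IsClosed (⋂ (a : α), {k : α → β → ℝ | ∑ b : β, k a b = 1}) :=
        isClosed_iInter fun a =>
          isClosed_eq (continuous_finset_sum _ fun b _ => hcont a b) continuous_const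
      have : Kset = (⋂ (a : α), ⋂ (b : β), {k : α → β → ℝ | 0 ≤ k a b})
          ∩ ⋂ (a : α), {k : α → β → ℝ | ∑ b : β, k a b = 1} := by
        ext k
        simp only [hKset, Set.mem_setOf_eq, Set.mem_inter_iff, Set.mem_iInter]
      rw [this]
      exact h1.inter h2
    refine (isCompact_closedBall (0 : α → β → ℝ) 1).of_isClosed_subset hclosed ?_
    intro k ⟨hk0, hk1⟩
    rw [Metric.mem_closedBall, dist_zero_right]
    refine pi_norm_le_iff_of_nonneg zero_le_one |>.2 fun a => ?_
    refine pi_norm_le_iff_of_nonneg zero_le_one |>.2 fun b => ?_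
    rw [Real.norm_eq_abs, abs_le]
    constructor
    · linarith [hk0 a b]
    · calc k a b ≤ ∑ b' : β, k a b' :=
            Finset.single_le_sum (fun b' _ => hk0 a b') (Finset.mem_univ b)
        _ = 1 := hk1 a
  have hCconv : Convex ℝ (L '' Kset) := hKconv.linear_image L
  have hCclosed : IsClosed (L '' Kset) :=
    (hKcomp.image L.continuous_of_finiteDimensional).isClosed
  set z : (β → ℝ) × (α → ℝ) := (fun b => q b, fun a => p a * (a : ℝ)) with hz
  have hzmem : z ∈ L '' Kset := by
    by_contra hznot
    obtain ⟨φ, u, hu, hC⟩ := geometric_hahn_banach_point_closed hCconv hCclosed hznot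
    set b' : β → ℝ := fun b => φ (Pi.single b 1, 0) with hb'
    set c' : α → ℝ := fun a => φ (0, Pi.single a 1) with hc'
    have φeval : ∀ (v : β → ℝ) (w : α → ℝ),
        φ (v, w) = (∑ b : β, v b * b' b) + ∑ a : α, w a * c' a := by
      intro v w
      have hdecomp : (v, w) = (∑ b : β, v b • ((Pi.single b (1 : ℝ) : β → ℝ), (0 : α → ℝ)))
          + (∑ a : α, w a • ((0 : β → ℝ), (Pi.single a (1 : ℝ) : α → ℝ))) := by
        have e1 : (∑ b : β, v b • (Pi.single b (1:ℝ) : β → ℝ)) = v := by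
          funext j
          simp [Finset.sum_apply, Pi.single_apply, mul_ite]
          rw [Finset.sum_eq_single j (fun b _ hb => if_neg (Ne.symm hb)) (fun h => absurd (Finset.mem_univ j) h), if_pos rfl]
        have e2 : (∑ a : α, w a • (Pi.single a (1:ℝ) : α → ℝ)) = w := by
          funext j
          simp [Finset.sum_apply, Pi.single_apply, mul_ite]
          rw [Finset.sum_eq_single j (fun b _ hb => if_neg (Ne.symm hb)) (fun h => absurd (Finset.mem_univ j) h), if_pos rfl]
        refine Prod.ext ?_ ?_
        · simp only [Prod.fst_add, Prod.fst_sum, Prod.smul_fst, Prod.smul_snd, e1]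
          simp
        · simp only [Prod.snd_add, Prod.snd_sum, Prod.smul_fst, Prod.smul_snd, e2]
          simp
      rw [hdecomp, map_add, map_sum φ _ Finset.univ, map_sum φ _ Finset.univ]
      simp only [_root_.map_smul, smul_eq_mul]
      rfl
    -- choose for each a a minimizer of b ↦ b' b + c' a * b
    have hmin : ∀ a : α, ∃ b₀ : β, ∀ b : β, b' b₀ + c' a * (b₀ : ℝ) ≤ b' b + c' a * (b : ℝ) := by
      intro a
      obtain ⟨b₀, _, hb₀⟩ := Finset.exists_min_image (Finset.univ : Finset β)
        (fun b => b' b + c' a * (b : ℝ)) Finset.univ_nonempty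
      exact ⟨b₀, fun b => hb₀ b (Finset.mem_univ b)⟩
    choose tmin htmin using hmin
    set A : α → ℝ := fun a => b' (tmin a) + c' a * (tmin a : ℝ) with hA
    -- the deterministic kernel choosing the minimizer
    set kst : α → β → ℝ := fun a b => if b = tmin a then 1 else 0 with hkst
    have hkmem : kst ∈ Kset := by
      constructor
      · intro a b
        simp only [hkst]
        split_ifs <;> norm_num
      · intro a
        simp [hkst]
        rw [Finset.sum_eq_single (tmin a) (fun b _ hb => if_neg hb) (fun h => absurd (Finset.mem_univ _) h), if_pos rfl]
    have hLkst : φ (L kst) = ∑ a : α, p (a : ℝ) * A a := by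
      rw [hL]
      simp only [LinearMap.coe_mk, AddHom.coe_mk]
      rw [φeval]
      have e1 : (∑ b : β, (∑ a : α, p (a : ℝ) * kst a b) * b' b)
          = ∑ a : α, p (a : ℝ) * b' (tmin a) := by
        simp_rw [Finset.sum_mul]
        rw [Finset.sum_comm]
        refine Finset.sum_congr rfl fun a _ => ?_
        rw [show (∑ b : β, p (a:ℝ) * kst a b * b' b)
            = ∑ b : β, (if b = tmin a then p (a:ℝ) * b' b else 0) from
          Finset.sum_congr rfl fun b _ => by simp only [hkst]; split_ifs <;> ring]
        rw [Finset.sum_eq_single (tmin a) (fun b _ hb => if_neg hb) (fun h => absurd (Finset.mem_univ _) h), if_pos rfl]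
      have e2 : ∀ a : α, (∑ b : β, kst a b * (b : ℝ)) = (tmin a : ℝ) := by
        intro a
        rw [show (∑ b : β, kst a b * (b : ℝ))
            = ∑ b : β, (if b = tmin a then (b : ℝ) else 0) from
          Finset.sum_congr rfl fun b _ => by simp only [hkst]; split_ifs <;> ring]
        rw [Finset.sum_eq_single (tmin a) (fun b _ hb => if_neg hb) (fun h => absurd (Finset.mem_univ _) h), if_pos rfl]
      rw [e1]
      rw [show (∑ a : α, p (a:ℝ) * (∑ b : β, kst a b * (b : ℝ)) * c' a)
          = ∑ a : α, p (a:ℝ) * ((tmin a : ℝ) * c' a) from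
        Finset.sum_congr rfl fun a _ => by rw [e2 a]; ring]
      rw [hA, ← Finset.sum_add_distrib]
      exact Finset.sum_congr rfl fun a _ => by ring
    -- the separation inequality in concrete form
    have hzval : φ z = (∑ b : β, q (b : ℝ) * b' b) + ∑ a : α, (p (a : ℝ) * (a : ℝ)) * c' a := by
      rw [hz, φeval]
    have hsep : (∑ b : β, q (b : ℝ) * b' b) + (∑ a : α, (p (a : ℝ) * (a : ℝ)) * c' a)
        < ∑ a : α, p (a : ℝ) * A a := by
      rw [← hzval, ← hLkst]
      exact hu.trans (hC _ (Set.mem_image_of_mem L hkmem))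
    -- the convex test function
    have huniv : (Finset.univ : Finset α).Nonempty := Finset.univ_nonempty
    set f : ℝ → ℝ := fun x => Finset.univ.sup' huniv (fun a : α => A a - c' a * x) with hf
    have hle_f : ∀ (a : α) (x : ℝ), A a - c' a * x ≤ f x := fun a x =>
      Finset.le_sup' (fun a : α => A a - c' a * x) (Finset.mem_univ a)
    have hf_le : ∀ (x v : ℝ), (∀ a : α, A a - c' a * x ≤ v) → f x ≤ v := fun x v h =>
      Finset.sup'_le _ _ fun a _ => h a
    have hconv : ConvexOn ℝ Set.univ f := by
      refine ⟨convex_univ, fun x _ y _ s t hs ht hst => ?_⟩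
      refine hf_le _ _ fun a => ?_
      have h1 := hle_f a x
      have h2 := hle_f a y
      have : A a - c' a * (s • x + t • y) = s * (A a - c' a * x) + t * (A a - c' a * y) := by
        simp only [smul_eq_mul]
        linear_combination (-(A a)) * hst
      rw [this]
      simp only [smul_eq_mul]
      have := mul_le_mul_of_nonneg_left h1 hs
      have := mul_le_mul_of_nonneg_left h2 ht
      linarith
    have hgrowth : ∃ a b : ℝ, ∀ x : ℝ, |f x| ≤ a * |x| + b := by
      refine ⟨Finset.univ.sup' huniv (fun a : α => |c' a|),
        Finset.univ.sup' huniv (fun a : α => |A a|), fun x => ?_⟩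
      set a0 := Finset.univ.sup' huniv (fun a : α => |c' a|) with ha0
      set b0 := Finset.univ.sup' huniv (fun a : α => |A a|) with hb0
      have hbound : ∀ a : α, |A a - c' a * x| ≤ a0 * |x| + b0 := by
        intro a
        have h1 : |A a| ≤ b0 := Finset.le_sup' (fun a : α => |A a|) (Finset.mem_univ a)
        have h2 : |c' a| ≤ a0 := Finset.le_sup' (fun a : α => |c' a|) (Finset.mem_univ a)
        calc |A a - c' a * x| ≤ |A a| + |c' a * x| := abs_sub _ _
          _ = |A a| + |c' a| * |x| := by rw [abs_mul]
          _ ≤ b0 + a0 * |x| := by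
              have := mul_le_mul_of_nonneg_right h2 (abs_nonneg x)
              linarith
          _ = a0 * |x| + b0 := by ring
      rw [abs_le]
      obtain ⟨a₀⟩ := (inferInstance : Nonempty α)
      constructor
      · have := hle_f a₀ x
        have h := hbound a₀
        rw [abs_le] at h
        linarith
      · refine hf_le _ _ fun a => ?_
        have h := hbound a
        rw [abs_le] at h
        linarith [h.2]
    have hkey := hco f hconv hgrowth
    -- evaluate the two sides
    have hfS : ∑ x ∈ S, p x * f x = ∑ a : α, p (a : ℝ) * f (a : ℝ) :=
      (Finset.sum_coe_sort S (fun x => p x * f x)).symm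
    have hfT : ∑ y ∈ T, q y * f y = ∑ b : β, q (b : ℝ) * f (b : ℝ) :=
      (Finset.sum_coe_sort T (fun y => q y * f y)).symm
    have hlower : ∑ a : α, p (a : ℝ) * (A a - c' a * (a : ℝ))
        ≤ ∑ a : α, p (a : ℝ) * f (a : ℝ) :=
      Finset.sum_le_sum fun a _ =>
        mul_le_mul_of_nonneg_left (hle_f a (a : ℝ)) (hp0 (a : ℝ))
    have hupper : ∑ b : β, q (b : ℝ) * f (b : ℝ) ≤ ∑ b : β, q (b : ℝ) * b' b := by
      refine Finset.sum_le_sum fun b _ => mul_le_mul_of_nonneg_left ?_ (hq0 (b : ℝ))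
      refine hf_le _ _ fun a => ?_
      show b' (tmin a) + c' a * ((tmin a : ℝ)) - c' a * (b : ℝ) ≤ b' b
      linarith [htmin a b]
    have hsplit : ∑ a : α, p (a : ℝ) * (A a - c' a * (a : ℝ))
        = (∑ a : α, p (a : ℝ) * A a) - ∑ a : α, (p (a : ℝ) * (a : ℝ)) * c' a := by
      rw [← Finset.sum_sub_distrib]
      exact Finset.sum_congr rfl fun a _ => by ring
    rw [hfS, hfT] at hkey
    rw [hsplit] at hlower
    linarith
  -- extract the kernel from the membership
  obtain ⟨k₀, hk₀mem, hLk₀⟩ := hzmem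
  obtain ⟨hk₀0, hk₀1⟩ := hk₀mem
  have h1 : ∀ b : β, (∑ a : α, p (a : ℝ) * k₀ a b) = q (b : ℝ) := fun b =>
    congrFun (congrArg Prod.fst hLk₀) b
  have h2 : ∀ a : α, p (a : ℝ) * (∑ b : β, k₀ a b * (b : ℝ)) = p (a : ℝ) * (a : ℝ) := fun a =>
    congrFun (congrArg Prod.snd hLk₀) a
  refine ⟨fun x y => if hx : x ∈ S then (if hy : y ∈ T then k₀ ⟨x, hx⟩ ⟨y, hy⟩ else 0) else 0,
    ?_, ?_, ?_, ?_⟩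
  · intro x y
    dsimp only
    split_ifs with hx hy
    · exact hk₀0 ⟨x, hx⟩ ⟨y, hy⟩
    · exact le_refl 0
    · exact le_refl 0
  · intro x hx
    simp only [dif_pos hx]
    rw [Finset.sum_dite_of_true (fun y hy => hy)]
    simp only [Subtype.coe_eta]
    exact hk₀1 ⟨x, hx⟩
  · intro y hy
    simp only [dif_pos hy, mul_dite, mul_zero]
    rw [Finset.sum_dite_of_true (fun x hx => hx)]
    simp only [Subtype.coe_eta]
    exact h1 ⟨y, hy⟩
  · intro x hx hpx
    simp only [dif_pos hx, dite_mul, zero_mul]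
    rw [Finset.sum_dite_of_true (fun y hy => hy)]
    simp only [Subtype.coe_eta]
    exact mul_left_cancel₀ hpx (h2 ⟨x, hx⟩)

noncomputable section Paths

open scoped Classical in
/-- The finite set of paths using states from `S 0, …, S (n-1)` (zero elsewhere). -/
def PP (S : ℕ → Finset ℝ) : ℕ → Finset (ℕ → ℝ)
  | 0 => {fun _ => 0}
  | n+1 => ((PP S n) ×ˢ (S n)).image fun z => Function.update z.1 n z.2

/-- The weight of a path under initial distribution `w 0` and transitions `K`. -/
def VV (w : ℕ → ℝ → ℝ) (K : ℕ → ℝ → ℝ → ℝ) (n : ℕ) (x : ℕ → ℝ) : ℝ :=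
  w 0 (x 0) * ∏ i ∈ Finset.range n, K i (x i) (x (i + 1))

lemma mem_PP_out {S : ℕ → Finset ℝ} : ∀ {n : ℕ} {x : ℕ → ℝ}, x ∈ PP S n →
    ∀ i, n ≤ i → x i = 0 := by
  classical
  intro n
  induction n with
  | zero =>
    intro x hx i _
    rw [PP, Finset.mem_singleton] at hx
    rw [hx]
  | succ n ih =>
    intro x hx i hi
    rw [PP, Finset.mem_image] at hx
    obtain ⟨z, hz, rfl⟩ := hx
    rw [Finset.mem_product] at hz
    rw [Function.update_of_ne (by omega)]
    exact ih hz.1 i (by omega)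

lemma mem_PP_mem {S : ℕ → Finset ℝ} : ∀ {n : ℕ} {x : ℕ → ℝ}, x ∈ PP S n →
    ∀ i, i < n → x i ∈ S i := by
  classical
  intro n
  induction n with
  | zero => intro x hx i hi; omega
  | succ n ih =>
    intro x hx i hi
    rw [PP, Finset.mem_image] at hx
    obtain ⟨z, hz, rfl⟩ := hx
    rw [Finset.mem_product] at hz
    by_cases hin : i = n
    · subst hin
      rw [Function.update_self]
      exact hz.2
    · rw [Function.update_of_ne hin]
      exact ih hz.1 i (by omega)

lemma sum_PP_succ {M : Type*} [AddCommMonoid M] {S : ℕ → Finset ℝ} (n : ℕ)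
    (f : (ℕ → ℝ) → M) :
    ∑ x ∈ PP S (n + 1), f x = ∑ x ∈ PP S n, ∑ y ∈ S n, f (Function.update x n y) := by
  classical
  rw [PP, Finset.sum_image, Finset.sum_product]
  intro z1 h1 z2 h2 heq
  rw [Finset.mem_coe, Finset.mem_product] at h1 h2
  have hy : z1.2 = z2.2 := by
    have := congrFun heq n
    dsimp only at this
    rwa [Function.update_self, Function.update_self] at this
  have hx : z1.1 = z2.1 := by
    funext i
    by_cases hin : i = n
    · subst hin
      rw [mem_PP_out h1.1 i le_rfl, mem_PP_out h2.1 i le_rfl]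
    · have := congrFun heq i
      dsimp only at this
      rwa [Function.update_of_ne hin, Function.update_of_ne hin] at this
  exact Prod.ext hx hy

lemma VV_update_high (w : ℕ → ℝ → ℝ) (K : ℕ → ℝ → ℝ → ℝ) {n j : ℕ} (h : n < j)
    (x : ℕ → ℝ) (y : ℝ) : VV w K n (Function.update x j y) = VV w K n x := by
  rw [VV, VV, Function.update_of_ne (by omega)]
  congr 1
  refine Finset.prod_congr rfl fun i hi => ?_
  rw [Finset.mem_range] at hi
  rw [Function.update_of_ne (by omega), Function.update_of_ne (by omega)]

lemma VV_succ_update (w : ℕ → ℝ → ℝ) (K : ℕ → ℝ → ℝ → ℝ) (n : ℕ) (x : ℕ → ℝ) (y : ℝ) :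
    VV w K (n + 1) (Function.update x (n + 1) y) = VV w K n x * K n (x n) y := by
  rw [show VV w K (n+1) (Function.update x (n+1) y)
      = VV w K n (Function.update x (n+1) y)
        * K n (Function.update x (n+1) y n) (Function.update x (n+1) y (n+1)) by
    rw [VV, VV, Finset.prod_range_succ]; ring]
  rw [VV_update_high w K (by omega), Function.update_of_ne (by omega), Function.update_self]

lemma VV_nonneg {w : ℕ → ℝ → ℝ} {K : ℕ → ℝ → ℝ → ℝ}
    (hw0 : ∀ i y, 0 ≤ w i y) (hK1 : ∀ i x y, 0 ≤ K i x y) (n : ℕ) (x : ℕ → ℝ) :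
    0 ≤ VV w K n x :=
  mul_nonneg (hw0 0 (x 0)) (Finset.prod_nonneg fun i _ => hK1 i (x i) (x (i+1)))

/-- Marginal law of the last coordinate. -/
lemma marginal_PP {S : ℕ → Finset ℝ} {w : ℕ → ℝ → ℝ} {K : ℕ → ℝ → ℝ → ℝ}
    (hK3 : ∀ n, ∀ y ∈ S (n+1), ∑ x ∈ S n, w n x * K n x y = w (n+1) y) :
    ∀ (n : ℕ) (φ : ℝ → ℝ),
      ∑ x ∈ PP S (n+1), VV w K n x * φ (x n) = ∑ y ∈ S n, w n y * φ y := by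
  intro n
  induction n with
  | zero =>
    intro φ
    rw [sum_PP_succ 0]
    rw [show PP S 0 = {fun _ => (0:ℝ)} from rfl, Finset.sum_singleton]
    refine Finset.sum_congr rfl fun y _ => ?_
    rw [VV, Function.update_self]
    simp
  | succ n ih =>
    intro φ
    rw [sum_PP_succ (n+1)]
    have e1 : ∀ x ∈ PP S (n+1), ∑ y ∈ S (n+1),
        VV w K (n+1) (Function.update x (n+1) y) * φ (Function.update x (n+1) y (n+1))
        = VV w K n x * ∑ y ∈ S (n+1), K n (x n) y * φ y := by
      intro x _
      rw [Finset.mul_sum]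
      refine Finset.sum_congr rfl fun y _ => ?_
      rw [VV_succ_update, Function.update_self]
      ring
    rw [Finset.sum_congr rfl e1, ih (fun t => ∑ y ∈ S (n+1), K n t y * φ y)]
    simp_rw [Finset.mul_sum]
    rw [Finset.sum_comm]
    refine Finset.sum_congr rfl fun y hy => ?_
    rw [← hK3 n y hy, Finset.sum_mul]
    exact Finset.sum_congr rfl fun t _ => by ring

/-- Collapsing the last step of the chain, for observables of the earlier coordinates. -/
lemma collapse_PP {S : ℕ → Finset ℝ} {w : ℕ → ℝ → ℝ} {K : ℕ → ℝ → ℝ → ℝ}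
    (hK2 : ∀ n, ∀ x ∈ S n, ∑ y ∈ S (n+1), K n x y = 1)
    (n : ℕ) (g : (ℕ → ℝ) → ℝ) (hg : ∀ x y : ℕ → ℝ, (∀ i, i ≤ n → x i = y i) → g x = g y) :
    ∑ x ∈ PP S (n+2), VV w K (n+1) x * g x = ∑ x ∈ PP S (n+1), VV w K n x * g x := by
  rw [sum_PP_succ (n+1)]
  refine Finset.sum_congr rfl fun x hx => ?_
  have e1 : ∀ y ∈ S (n+1),
      VV w K (n+1) (Function.update x (n+1) y) * g (Function.update x (n+1) y)
      = VV w K n x * K n (x n) y * g x := by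
    intro y _
    rw [VV_succ_update]
    congr 1
    exact hg _ _ fun i hi => Function.update_of_ne (by omega) _ _
  rw [Finset.sum_congr rfl e1]
  rw [show (∑ y ∈ S (n+1), VV w K n x * K n (x n) y * g x)
      = (VV w K n x * g x) * ∑ y ∈ S (n+1), K n (x n) y by
    rw [Finset.mul_sum]; exact Finset.sum_congr rfl fun y _ => by ring]
  rw [hK2 n (x n) (mem_PP_mem hx n (by omega)), mul_one]

lemma collapse_PP_iter {S : ℕ → Finset ℝ} {w : ℕ → ℝ → ℝ} {K : ℕ → ℝ → ℝ → ℝ}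
    (hK2 : ∀ n, ∀ x ∈ S n, ∑ y ∈ S (n+1), K n x y = 1)
    (j : ℕ) (g : (ℕ → ℝ) → ℝ) (hg : ∀ x y : ℕ → ℝ, (∀ i, i ≤ j → x i = y i) → g x = g y) :
    ∀ n, j ≤ n → ∑ x ∈ PP S (n+1), VV w K n x * g x = ∑ x ∈ PP S (j+1), VV w K j x * g x := by
  intro n
  induction n with
  | zero =>
    intro h
    have hj : j = 0 := by omega
    subst hj
    rfl
  | succ n ih =>
    intro h
    rcases Nat.eq_or_lt_of_le h with h' | h'
    · subst h'; rfl
    · have hjn : j ≤ n := by omega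
      rw [← ih hjn]
      exact collapse_PP hK2 n g fun x y hxy => hg x y fun i hi => hxy i (by omega)

/-- The marginal law of coordinate `j`. -/
lemma marginal_PP' {S : ℕ → Finset ℝ} {w : ℕ → ℝ → ℝ} {K : ℕ → ℝ → ℝ → ℝ}
    (hK2 : ∀ n, ∀ x ∈ S n, ∑ y ∈ S (n+1), K n x y = 1)
    (hK3 : ∀ n, ∀ y ∈ S (n+1), ∑ x ∈ S n, w n x * K n x y = w (n+1) y)
    {j n : ℕ} (hjn : j ≤ n) (φ : ℝ → ℝ) :
    ∑ x ∈ PP S (n+1), VV w K n x * φ (x j) = ∑ y ∈ S j, w j y * φ y := by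
  rw [collapse_PP_iter hK2 j (fun x => φ (x j))
    (fun x y hxy => by rw [hxy j le_rfl]) n hjn]
  exact marginal_PP hK3 j φ

/-- Positivity propagation: a path of positive weight passes through states of
positive mass. -/
lemma w_ne_zero_of_VV_ne_zero {S : ℕ → Finset ℝ} {w : ℕ → ℝ → ℝ} {K : ℕ → ℝ → ℝ → ℝ}
    (hw0 : ∀ i y, 0 ≤ w i y) (hK1 : ∀ i x y, 0 ≤ K i x y)
    (hK3 : ∀ n, ∀ y ∈ S (n+1), ∑ x ∈ S n, w n x * K n x y = w (n+1) y)
    {n : ℕ} {x : ℕ → ℝ} (hx : x ∈ PP S (n+1)) (hVV : VV w K n x ≠ 0) :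
    w n (x n) ≠ 0 := by
  classical
  have key := marginal_PP hK3 n (fun t => if t = x n then 1 else 0)
  have h1 : ∑ y ∈ S n, w n y * (if y = x n then (1:ℝ) else 0) = w n (x n) := by
    rw [show (∑ y ∈ S n, w n y * (if y = x n then (1:ℝ) else 0))
        = ∑ y ∈ S n, (if y = x n then w n y else 0) from
      Finset.sum_congr rfl fun y _ => by split_ifs <;> ring]
    rw [Finset.sum_ite_eq' (S n) (x n) (fun y => w n y)]
    rw [if_pos (mem_PP_mem hx n (by omega))]
  have h2 : VV w K n x ≤ ∑ x' ∈ PP S (n+1), VV w K n x' * (if x' n = x n then 1 else 0) := by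
    have := Finset.single_le_sum (f := fun x' => VV w K n x' * (if x' n = x n then (1:ℝ) else 0))
      (fun x' _ => mul_nonneg (VV_nonneg hw0 hK1 n x') (by split_ifs <;> norm_num)) hx
    simpa using this
  have hpos : 0 < VV w K n x := lt_of_le_of_ne (VV_nonneg hw0 hK1 n x) (Ne.symm hVV)
  intro h0
  rw [key, h1, h0] at h2
  linarith

/-- One martingale step. -/
lemma martingale_step_PP {S : ℕ → Finset ℝ} {w : ℕ → ℝ → ℝ} {K : ℕ → ℝ → ℝ → ℝ}
    (hw0 : ∀ i y, 0 ≤ w i y) (hK1 : ∀ i x y, 0 ≤ K i x y)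
    (hK3 : ∀ n, ∀ y ∈ S (n+1), ∑ x ∈ S n, w n x * K n x y = w (n+1) y)
    (j : ℕ) (hK4 : ∀ x ∈ S j, w j x ≠ 0 → ∑ y ∈ S (j+1), K j x y * y = x)
    (g : (ℕ → ℝ) → ℝ) (hg : ∀ x y : ℕ → ℝ, (∀ i, i ≤ j → x i = y i) → g x = g y) :
    ∑ x ∈ PP S (j+2), VV w K (j+1) x * (g x * x (j+1))
      = ∑ x ∈ PP S (j+1), VV w K j x * (g x * x j) := by
  rw [sum_PP_succ (j+1)]
  refine Finset.sum_congr rfl fun x hx => ?_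
  have e1 : ∀ y ∈ S (j+1),
      VV w K (j+1) (Function.update x (j+1) y)
        * (g (Function.update x (j+1) y) * Function.update x (j+1) y (j+1))
      = VV w K j x * g x * (K j (x j) y * y) := by
    intro y _
    rw [VV_succ_update, Function.update_self,
      hg (Function.update x (j+1) y) x fun i hi => Function.update_of_ne (by omega) _ _]
    ring
  rw [Finset.sum_congr rfl e1]
  rw [← Finset.mul_sum]
  by_cases hV : VV w K j x = 0
  · rw [hV]; ring
  · rw [hK4 (x j) (mem_PP_mem hx j (by omega))
      (w_ne_zero_of_VV_ne_zero hw0 hK1 hK3 hx hV)]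
    ring

/-- Full martingale property between consecutive coordinates. -/
lemma martingale_PP {S : ℕ → Finset ℝ} {w : ℕ → ℝ → ℝ} {K : ℕ → ℝ → ℝ → ℝ}
    (hw0 : ∀ i y, 0 ≤ w i y) (hK1 : ∀ i x y, 0 ≤ K i x y)
    (hK2 : ∀ n, ∀ x ∈ S n, ∑ y ∈ S (n+1), K n x y = 1)
    (hK3 : ∀ n, ∀ y ∈ S (n+1), ∑ x ∈ S n, w n x * K n x y = w (n+1) y)
    (j : ℕ) (hK4 : ∀ x ∈ S j, w j x ≠ 0 → ∑ y ∈ S (j+1), K j x y * y = x)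
    {n : ℕ} (hjn : j + 1 ≤ n)
    (g : (ℕ → ℝ) → ℝ) (hg : ∀ x y : ℕ → ℝ, (∀ i, i ≤ j → x i = y i) → g x = g y) :
    ∑ x ∈ PP S (n+1), VV w K n x * (g x * x (j+1))
      = ∑ x ∈ PP S (n+1), VV w K n x * (g x * x j) := by
  rw [collapse_PP_iter hK2 (j+1) (fun x => g x * x (j+1))
    (fun x y hxy => by
      rw [hg x y fun i hi => hxy i (by omega), hxy (j+1) le_rfl]) n hjn]
  rw [collapse_PP_iter hK2 j (fun x => g x * x j)
    (fun x y hxy => by rw [hg x y hxy, hxy j le_rfl]) n (by omega)]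
  exact martingale_step_PP hw0 hK1 hK3 j hK4 g hg

end Paths

open scoped ENNReal

/-- Strassen, finite-support case: if `μ₁,…,μ_m` are finitely supported
probability measures on `ℝ`, non-decreasing in convex order, all with mean 1, then there
is a probability measure on `ℝᵐ` with these marginals under which the coordinate process
is a martingale with `E[M₁] = 1`. -/
theorem strassen_finite_support
    (m : ℕ) (hm : 0 < m) (μ : Fin m → Measure ℝ)
    [∀ i, IsProbabilityMeasure (μ i)]
    (hfin : ∀ i, ∃ s : Finset ℝ, μ i (↑s : Set ℝ)ᶜ = 0)
    (hmean : ∀ i, ∫ x, x ∂μ i = 1)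
    (hndco : ∀ f : ℝ → ℝ, ConvexOn ℝ Set.univ f →
      (∃ a b : ℝ, ∀ x, |f x| ≤ a * |x| + b) →
      ∀ i i' : Fin m, i ≤ i' → ∫ x, f x ∂μ i ≤ ∫ x, f x ∂μ i') :
    ∃ π : Measure (Fin m → ℝ), IsProbabilityMeasure π ∧
      (∀ i : Fin m, π.map (fun x => x i) = μ i) ∧
      (∫ x, x ⟨0, hm⟩ ∂π = 1) ∧
      ∀ i : ℕ, ∀ h : i + 1 < m,
        π[(fun x => x ⟨i + 1, h⟩) |
            MeasurableSpace.comap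
              (fun (x : Fin m → ℝ) (j : Fin (i + 1)) => x (Fin.castLE (le_of_lt h) j))
              inferInstance]
          =ᵐ[π] fun x => x ⟨i, Nat.lt_of_succ_lt h⟩ := by
  classical
  choose s hs using hfin
  -- global state spaces and weights
  set S : ℕ → Finset ℝ := fun i => if h : i < m then s ⟨i, h⟩ else {0} with hSdef
  set w : ℕ → ℝ → ℝ := fun i y =>
    if h : i < m then (μ ⟨i, h⟩ {y}).toReal else (if y = 0 then 1 else 0) with hwdef
  have hSi : ∀ i : Fin m, S i.1 = s i := fun i => by
    rw [hSdef]; simp only [i.isLt, dif_pos, Fin.eta]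
  have hwi : ∀ (i : Fin m) (y : ℝ), w i.1 y = (μ i {y}).toReal := fun i y => by
    rw [hwdef]; simp only [i.isLt, dif_pos, Fin.eta]
  have hw0 : ∀ i y, 0 ≤ w i y := by
    intro i y
    rw [hwdef]
    dsimp only
    split_ifs <;> simp [ENNReal.toReal_nonneg]
  have hrep : ∀ i : Fin m, μ i = ∑ y ∈ s i, μ i {y} • Measure.dirac y :=
    fun i => measure_eq_sum_dirac (μ i) (s i) (hs i)
  have hofReal : ∀ (i : Fin m) (y : ℝ), ENNReal.ofReal (w i.1 y) = μ i {y} := fun i y => by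
    rw [hwi i y, ENNReal.ofReal_toReal (measure_ne_top _ _)]
  -- total mass one
  have hsum1 : ∀ i, ∑ y ∈ S i, w i y = 1 := by
    intro i
    by_cases h : i < m
    · set i' : Fin m := ⟨i, h⟩
      have h1 : (1 : ℝ≥0∞) = ∑ y ∈ s i', μ i' {y} := by
        conv_lhs => rw [← measure_univ (μ := μ i'), hrep i']
        rw [Measure.finset_sum_apply]
        exact Finset.sum_congr rfl fun y _ => by
          rw [Measure.smul_apply, measure_univ, smul_eq_mul, mul_one]
      have hX : S i = s i' := hSi i'
      have h2 := congrArg ENNReal.toReal h1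
      rw [ENNReal.toReal_sum (fun y _ => measure_ne_top _ _)] at h2
      rw [hX]
      calc ∑ y ∈ s i', w i y = ∑ y ∈ s i', ((μ i') {y}).toReal :=
            Finset.sum_congr rfl fun y _ => hwi i' y
        _ = 1 := by rw [← h2]; norm_num
    · rw [hSdef, hwdef]
      simp only [dif_neg h]
      simp
  -- means
  have hmean' : ∀ i : Fin m, ∑ y ∈ S i.1, w i.1 y * y = 1 := by
    intro i
    have h1 := hmean i
    rw [hrep i] at h1
    rw [integral_sum_dirac (s i) (fun y => y) (fun y => μ i {y}) (fun y _ => measure_ne_top _ _)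
      (fun x => x)] at h1
    rw [hSi i]
    rw [← h1]
    exact Finset.sum_congr rfl fun y _ => by rw [hwi i y]
  -- discrete convex order between consecutive marginals
  have hco : ∀ i : ℕ, ∀ h : i + 1 < m, ∀ f : ℝ → ℝ, ConvexOn ℝ Set.univ f →
      (∃ a b : ℝ, ∀ x, |f x| ≤ a * |x| + b) →
      ∑ x ∈ S i, w i x * f x ≤ ∑ y ∈ S (i+1), w (i+1) y * f y := by
    intro i h f hf hgrowth
    have hii : (⟨i, Nat.lt_of_succ_lt h⟩ : Fin m) ≤ ⟨i+1, h⟩ := by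
      simp [Fin.mk_le_mk]
    have key := hndco f hf hgrowth ⟨i, Nat.lt_of_succ_lt h⟩ ⟨i+1, h⟩ hii
    rw [hrep ⟨i, Nat.lt_of_succ_lt h⟩, hrep ⟨i+1, h⟩] at key
    rw [integral_sum_dirac _ (fun y => y) _ (fun y _ => measure_ne_top _ _) f,
      integral_sum_dirac _ (fun y => y) _ (fun y _ => measure_ne_top _ _) f] at key
    calc ∑ x ∈ S i, w i x * f x
        = ∑ x ∈ s ⟨i, Nat.lt_of_succ_lt h⟩, ((μ ⟨i, Nat.lt_of_succ_lt h⟩) {x}).toReal * f x := by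
          rw [hSi ⟨i, Nat.lt_of_succ_lt h⟩]
          exact Finset.sum_congr rfl fun y _ => by rw [hwi ⟨i, Nat.lt_of_succ_lt h⟩ y]
      _ ≤ ∑ y ∈ s ⟨i+1, h⟩, ((μ ⟨i+1, h⟩) {y}).toReal * f y := key
      _ = ∑ y ∈ S (i+1), w (i+1) y * f y := by
          rw [hSi ⟨i+1, h⟩]
          exact Finset.sum_congr rfl fun y _ => by rw [hwi ⟨i+1, h⟩ y]
  -- construction of the one-step martingale kernels
  have hker : ∀ i : ℕ, ∃ k : ℝ → ℝ → ℝ, (∀ x y, 0 ≤ k x y) ∧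
      (∀ x ∈ S i, ∑ y ∈ S (i+1), k x y = 1) ∧
      (∀ y ∈ S (i+1), ∑ x ∈ S i, w i x * k x y = w (i+1) y) ∧
      (i + 1 < m → ∀ x ∈ S i, w i x ≠ 0 → ∑ y ∈ S (i+1), k x y * y = x) := by
    intro i
    by_cases h : i + 1 < m
    · obtain ⟨k, h1, h2, h3, h4⟩ := exists_martingale_kernel (S i) (S (i+1)) (w i) (w (i+1))
        (fun x => hw0 i x) (fun y => hw0 (i+1) y) (hsum1 i) (hsum1 (i+1)) (hco i h)
      exact ⟨k, h1, h2, h3, fun _ => h4⟩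
    · refine ⟨fun x y => if y = 0 then 1 else 0, ?_, ?_, ?_, ?_⟩
      · intro x y; dsimp only; split_ifs <;> norm_num
      · intro x _
        have hS1 : S (i+1) = {0} := by rw [hSdef]; simp only [dif_neg (by omega : ¬ i + 1 < m)]
        rw [hS1]
        simp
      · intro y hy
        have hS1 : S (i+1) = {0} := by rw [hSdef]; simp only [dif_neg (by omega : ¬ i + 1 < m)]
        have hw1 : w (i+1) y = if y = 0 then 1 else 0 := by
          rw [hwdef]; simp only [dif_neg (by omega : ¬ i + 1 < m)]
        rw [hS1, Finset.mem_singleton] at hy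
        subst hy
        rw [hw1, if_pos rfl]
        rw [show (∑ x ∈ S i, w i x * (if (0:ℝ) = 0 then (1:ℝ) else 0)) = ∑ x ∈ S i, w i x from
          Finset.sum_congr rfl fun x _ => by rw [if_pos rfl, mul_one]]
        exact hsum1 i
      · intro h'; exact absurd h' h
  choose K hK1 hK2 hK3 hK4 using hker
  -- the path measure
  set emb : (ℕ → ℝ) → (Fin m → ℝ) := fun x i => x i with hembdef
  obtain ⟨n, rfl⟩ : ∃ n, m = n + 1 := ⟨m - 1, by omega⟩
  set π : Measure (Fin (n+1) → ℝ) :=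
    ∑ x ∈ PP S (n+1), ENNReal.ofReal (VV w K n x) • Measure.dirac (emb x) with hπdef
  have hVnn : ∀ x, 0 ≤ VV w K n x := VV_nonneg hw0 hK1 n
  have htot : ∑ x ∈ PP S (n+1), VV w K n x = 1 := by
    have h1 := marginal_PP' hK2 hK3 (Nat.zero_le n) (fun _ => (1:ℝ))
    rw [show (∑ x ∈ PP S (n+1), VV w K n x * (fun _ : ℝ => (1:ℝ)) (x 0))
        = ∑ x ∈ PP S (n+1), VV w K n x from
      Finset.sum_congr rfl fun x _ => mul_one _] at h1
    rw [h1]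
    rw [show (∑ y ∈ S 0, w 0 y * (fun _ : ℝ => (1:ℝ)) y) = ∑ y ∈ S 0, w 0 y from
      Finset.sum_congr rfl fun y _ => mul_one _]
    exact hsum1 0
  have hprob : IsProbabilityMeasure π := by
    constructor
    rw [hπdef, Measure.finset_sum_apply]
    rw [show (∑ x ∈ PP S (n+1),
          (ENNReal.ofReal (VV w K n x) • Measure.dirac (emb x)) Set.univ)
        = ∑ x ∈ PP S (n+1), ENNReal.ofReal (VV w K n x) from
      Finset.sum_congr rfl fun x _ => by
        rw [Measure.smul_apply, measure_univ, smul_eq_mul, mul_one]]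
    rw [← ENNReal.ofReal_sum_of_nonneg (fun x _ => hVnn x), htot, ENNReal.ofReal_one]
  have hintegral : ∀ f : (Fin (n+1) → ℝ) → ℝ,
      ∫ v, f v ∂π = ∑ x ∈ PP S (n+1), VV w K n x * f (emb x) := by
    intro f
    rw [hπdef, integral_sum_dirac _ emb _ (fun x _ => ENNReal.ofReal_ne_top) f]
    exact Finset.sum_congr rfl fun x _ => by rw [ENNReal.toReal_ofReal (hVnn x)]
  -- marginals
  have hmarg : ∀ i : Fin (n+1), π.map (fun x => x i) = μ i := by
    intro i
    ext A hA
    rw [Measure.map_apply (measurable_pi_apply i) hA]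
    rw [hπdef, Measure.finset_sum_apply]
    have hl : ∀ x ∈ PP S (n+1),
        (ENNReal.ofReal (VV w K n x) • Measure.dirac (emb x)) ((fun v => v i) ⁻¹' A)
        = ENNReal.ofReal (VV w K n x * (if x (i:ℕ) ∈ A then 1 else 0)) := by
      intro x _
      rw [Measure.smul_apply, Measure.dirac_apply, smul_eq_mul]
      by_cases hxa : x (i:ℕ) ∈ A
      · rw [Set.indicator_of_mem
          (show emb x ∈ (fun v : Fin (n+1) → ℝ => v i) ⁻¹' A from hxa),
          Pi.one_apply, mul_one, if_pos hxa, mul_one]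
      · rw [Set.indicator_of_notMem
          (show emb x ∉ (fun v : Fin (n+1) → ℝ => v i) ⁻¹' A from hxa),
          if_neg hxa, mul_zero, mul_zero, ENNReal.ofReal_zero]
    rw [Finset.sum_congr rfl hl,
      ← ENNReal.ofReal_sum_of_nonneg
        (fun x _ => mul_nonneg (hVnn x) (by split_ifs <;> norm_num))]
    rw [marginal_PP' hK2 hK3 (show (i:ℕ) ≤ n by omega) (fun t => if t ∈ A then 1 else 0)]
    rw [hrep i, Measure.finset_sum_apply]
    have hr : ∀ y ∈ s i, ((μ i) {y} • Measure.dirac y) A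
        = ENNReal.ofReal (w (i:ℕ) y * (if y ∈ A then 1 else 0)) := by
      intro y _
      rw [Measure.smul_apply, Measure.dirac_apply, smul_eq_mul, ← hofReal i y]
      by_cases hya : y ∈ A
      · rw [Set.indicator_of_mem hya, Pi.one_apply, mul_one, if_pos hya, mul_one]
      · rw [Set.indicator_of_notMem hya, if_neg hya, mul_zero, mul_zero, ENNReal.ofReal_zero]
    rw [Finset.sum_congr rfl hr,
      ← ENNReal.ofReal_sum_of_nonneg
        (fun y _ => mul_nonneg (hw0 (i:ℕ) y) (by split_ifs <;> norm_num))]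
    congr 1
    rw [hSi i]
  -- initial mean
  have hmean1 : ∫ v, v ⟨0, hm⟩ ∂π = 1 := by
    rw [hintegral (fun v => v ⟨0, hm⟩)]
    rw [show (∑ x ∈ PP S (n+1), VV w K n x * (emb x) ⟨0, hm⟩)
        = ∑ x ∈ PP S (n+1), VV w K n x * (fun t : ℝ => t) (x 0) from rfl]
    rw [marginal_PP' hK2 hK3 (Nat.zero_le n) (fun t => t)]
    exact hmean' ⟨0, hm⟩
  refine ⟨π, hprob, hmarg, hmean1, ?_⟩
  -- martingale property
  intro i h
  set F : (Fin (n+1) → ℝ) → (Fin (i+1) → ℝ) :=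
    fun x j => x (Fin.castLE (le_of_lt h) j) with hFdef
  have hFmeas : Measurable F := measurable_pi_lambda _ fun j => measurable_pi_apply _
  have hle : MeasurableSpace.comap F inferInstance
      ≤ (inferInstance : MeasurableSpace (Fin (n+1) → ℝ)) := hFmeas.comap_le
  haveI : IsFiniteMeasure π := inferInstance
  haveI : SigmaFinite (π.trim hle) := inferInstance
  have hintf : Integrable (fun x : Fin (n+1) → ℝ => x ⟨i+1, h⟩) π := by
    rw [hπdef]
    exact integrable_sum_dirac _ emb _ (fun x _ => ENNReal.ofReal_ne_top) _
  have hintg : Integrable (fun x : Fin (n+1) → ℝ => x ⟨i, Nat.lt_of_succ_lt h⟩) π := by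
    rw [hπdef]
    exact integrable_sum_dirac _ emb _ (fun x _ => ENNReal.ofReal_ne_top) _
  have hgmeas : Measurable[MeasurableSpace.comap F inferInstance]
      (fun x : Fin (n+1) → ℝ => x ⟨i, Nat.lt_of_succ_lt h⟩) := by
    have heq : (fun x : Fin (n+1) → ℝ => x ⟨i, Nat.lt_of_succ_lt h⟩)
        = (fun v : Fin (i+1) → ℝ => v ⟨i, Nat.lt_succ_self i⟩) ∘ F := by
      funext x
      rfl
    rw [heq]
    exact (measurable_pi_apply _).comp (Measurable.of_comap_le le_rfl)
  refine (ae_eq_condExp_of_forall_setIntegral_eq hle hintf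
    (fun t _ _ => hintg.integrableOn) ?_ ⟨_, hgmeas.stronglyMeasurable, .rfl⟩).symm
  intro t ht _
  obtain ⟨B, hB, rfl⟩ := MeasurableSpace.measurableSet_comap.mp ht
  have hset : ∀ f : (Fin (n+1) → ℝ) → ℝ, ∫ v in F ⁻¹' B, f v ∂π
      = ∑ x ∈ PP S (n+1), VV w K n x
          * ((if F (emb x) ∈ B then (1:ℝ) else 0) * f (emb x)) := by
    intro f
    rw [hπdef, setIntegral_sum_dirac _ emb _ (fun x _ => ENNReal.ofReal_ne_top) f _]
    refine Finset.sum_congr rfl fun x _ => ?_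
    rw [ENNReal.toReal_ofReal (hVnn x)]
    by_cases hxB : F (emb x) ∈ B
    · rw [if_pos (show emb x ∈ F ⁻¹' B from hxB), if_pos hxB, one_mul]
    · rw [if_neg (show emb x ∉ F ⁻¹' B from hxB), if_neg hxB, zero_mul, mul_zero]
  rw [hset, hset]
  have key := martingale_PP hw0 hK1 hK2 hK3 i (hK4 i h) (show i + 1 ≤ n by omega)
    (fun x : ℕ → ℝ => if F (emb x) ∈ B then (1:ℝ) else 0)
    (fun x y hxy => by
      have : F (emb x) = F (emb y) := by
        funext j
        have hjv : ((Fin.castLE (le_of_lt h) j : Fin (n+1)) : ℕ) = (j : ℕ) := rfl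
        exact hxy _ (by rw [hjv]; exact Nat.lt_succ_iff.mp j.2)
      rw [this])
  have e1 : ∀ x : ℕ → ℝ, (emb x) ⟨i+1, h⟩ = x (i+1) := fun x => rfl
  have e2 : ∀ x : ℕ → ℝ, (emb x) ⟨i, Nat.lt_of_succ_lt h⟩ = x i := fun x => rfl
  calc ∑ x ∈ PP S (n+1), VV w K n x
          * ((if F (emb x) ∈ B then (1:ℝ) else 0) * (emb x) ⟨i, Nat.lt_of_succ_lt h⟩)
      = ∑ x ∈ PP S (n+1), VV w K n x
          * ((if F (emb x) ∈ B then (1:ℝ) else 0) * x i) := by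
        exact Finset.sum_congr rfl fun x _ => by rw [e2]
    _ = ∑ x ∈ PP S (n+1), VV w K n x
          * ((if F (emb x) ∈ B then (1:ℝ) else 0) * x (i+1)) := key.symm
    _ = ∑ x ∈ PP S (n+1), VV w K n x
          * ((if F (emb x) ∈ B then (1:ℝ) else 0) * (emb x) ⟨i+1, h⟩) := by
        exact Finset.sum_congr rfl fun x _ => by rw [e1]
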